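/- Let (X,G) be a dynamical system and H an almost normal subgroup of G. Let x ∈ X be such that the closure of the orbit O(x) = {g•x : g ∈ G} intersects X_H = {z ∈ X : G_z = gHg⁻¹ for some g ∈ G}. Then for any g, l ∈ G, if gHg⁻¹ ⊆ G_x and lHl⁻¹ ⊆ G_x, then gHg⁻¹ = lHl⁻¹. -/

import Mathlib

/-- The conjugate subgroup `g H g⁻¹`. -/
def conjSubgroup {G : Type*} [Group G] (g : G) (H : Subgroup G) : Subgroup G :=
  Subgroup.map (MulAut.conj g).toMonoidHom H

/-- The set `X_H` of points of `X` whose stabilizer is conjugate to `H`. -/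
def setXH (G : Type*) {X : Type*} [Group G] [MulAction G X] (H : Subgroup G) : Set X :=
  {x : X | ∃ g : G, MulAction.stabilizer G x = conjSubgroup g H}

section Aux

variable {G : Type*} [Group G]

lemma mem_conjSubgroup {g s : G} {H : Subgroup G} :
    s ∈ conjSubgroup g H ↔ g⁻¹ * s * g ∈ H := by
  constructor
  · rintro ⟨h, hh, rfl⟩
    simpa [MulAut.conj_apply, mul_assoc] using hh
  · intro h
    refine ⟨g⁻¹ * s * g, h, ?_⟩
    simp only [MulEquiv.coe_toMonoidHom, MulAut.conj_apply]
    group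

lemma conjSubgroup_conjSubgroup (a b : G) (H : Subgroup G) :
    conjSubgroup a (conjSubgroup b H) = conjSubgroup (a * b) H := by
  ext s
  rw [mem_conjSubgroup, mem_conjSubgroup, mem_conjSubgroup,
    show b⁻¹ * (a⁻¹ * s * a) * b = (a * b)⁻¹ * s * (a * b) by group]

lemma conjSubgroup_one (H : Subgroup G) : conjSubgroup 1 H = H := by
  ext s; simp [mem_conjSubgroup]

lemma conjSubgroup_mono (a : G) {H K : Subgroup G} (h : H ≤ K) :
    conjSubgroup a H ≤ conjSubgroup a K :=
  Subgroup.map_mono h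

lemma conjSubgroup_eq_of_mem_normalizer {n : G} {K : Subgroup G}
    (hn : n ∈ Subgroup.normalizer (K : Set G)) : conjSubgroup n K = K := by
  rw [Subgroup.mem_normalizer_iff] at hn
  ext s
  rw [mem_conjSubgroup]
  have h := hn (n⁻¹ * s * n)
  rw [show n * (n⁻¹ * s * n) * n⁻¹ = s by group] at h
  exact h

lemma index_conjSubgroup (a : G) (K : Subgroup G) :
    (conjSubgroup a K).index = K.index := by
  apply Subgroup.index_map_eq
  · exact (MulAut.conj a).surjective
  · exact le_of_eq_of_le ((MonoidHom.ker_eq_bot_iff _).mpr (MulAut.conj a).injective) bot_le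

/-- Rigidity: if `H ≤ cHc⁻¹` and the normalizer of `H` has finite index, then `cHc⁻¹ = H`. -/
lemma conjSubgroup_eq_of_le_conj (H : Subgroup G) (hAN : (Subgroup.normalizer (H : Set G)).FiniteIndex) (c : G)
    (h : H ≤ conjSubgroup c H) : conjSubgroup c H = H := by
  haveI := hAN
  haveI : Finite (G ⧸ Subgroup.normalizer (H : Set G)) := Subgroup.finite_quotient_of_finiteIndex
  obtain ⟨i, j, hij, hmk⟩ :=
    Finite.exists_ne_map_eq_of_infinite
      (fun m : ℕ => (QuotientGroup.mk (c ^ m) : G ⧸ Subgroup.normalizer (H : Set G)))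
  wlog hlt : i < j generalizing i j
  · exact this j i hij.symm hmk.symm (hij.lt_or_gt.resolve_left hlt)
  have hcn : c ^ (j - i) ∈ Subgroup.normalizer (H : Set G) := by
    have h2 := QuotientGroup.eq.mp hmk
    have h3 : c ^ j = c ^ i * c ^ (j - i) := by
      rw [← pow_add, Nat.add_sub_cancel' hlt.le]
    rwa [h3, inv_mul_cancel_left] at h2
  set n := j - i with hn
  have hnpos : 0 < n := Nat.sub_pos_of_lt hlt
  have key : ∀ m : ℕ, H ≤ conjSubgroup (c ^ m) H := by
    intro m
    induction m with
    | zero => simp [conjSubgroup_one]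
    | succ m ih =>
        calc H ≤ conjSubgroup c H := h
          _ ≤ conjSubgroup c (conjSubgroup (c ^ m) H) := conjSubgroup_mono c ih
          _ = conjSubgroup (c ^ (m + 1)) H := by
              rw [conjSubgroup_conjSubgroup, ← pow_succ']
  refine le_antisymm ?_ h
  calc conjSubgroup c H ≤ conjSubgroup c (conjSubgroup (c ^ (n - 1)) H) :=
        conjSubgroup_mono c (key _)
    _ = conjSubgroup (c ^ n) H := by
        rw [conjSubgroup_conjSubgroup, ← pow_succ', Nat.sub_add_cancel hnpos]
    _ = H := conjSubgroup_eq_of_mem_normalizer hcn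

/-- Two conjugates of an almost normal subgroup, one contained in the other, are equal. -/
lemma conj_eq_conj_of_le (H : Subgroup G) (hAN : (Subgroup.normalizer (H : Set G)).FiniteIndex) {a b : G}
    (hab : conjSubgroup a H ≤ conjSubgroup b H) : conjSubgroup a H = conjSubgroup b H := by
  have h1 : conjSubgroup (b⁻¹ * a) H ≤ H := by
    have := conjSubgroup_mono b⁻¹ hab
    rwa [conjSubgroup_conjSubgroup, conjSubgroup_conjSubgroup, inv_mul_cancel,
      conjSubgroup_one] at this
  have h2 : H ≤ conjSubgroup (a⁻¹ * b) H := by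
    have := conjSubgroup_mono (a⁻¹ * b) h1
    rwa [conjSubgroup_conjSubgroup, show a⁻¹ * b * (b⁻¹ * a) = 1 by group,
      conjSubgroup_one] at this
  have h3 := conjSubgroup_eq_of_le_conj H hAN _ h2
  have h4 := congrArg (conjSubgroup a) h3
  rw [conjSubgroup_conjSubgroup, show a * (a⁻¹ * b) = b by group] at h4
  exact h4.symm

end Aux

/-- Let `(X,G)` be a dynamical system, `H` an almost normal subgroup of `G`, and `x ∈ X` a point
whose orbit closure meets `X_H`. If `g H g⁻¹ ⊆ G_x` and `l H l⁻¹ ⊆ G_x`,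
then `g H g⁻¹ = l H l⁻¹`. -/
theorem stmt2 {G X : Type*} [Group G] [Countable G]
    [TopologicalSpace X] [CompactSpace X] [T2Space X]
    [MulAction G X] [ContinuousConstSMul G X]
    (H : Subgroup G) (hAN : (Subgroup.normalizer (H : Set G)).FiniteIndex)
    (x : X) (hx : (closure (MulAction.orbit G x) ∩ setXH G H).Nonempty)
    (g l : G)
    (hg : conjSubgroup g H ≤ MulAction.stabilizer G x)
    (hl : conjSubgroup l H ≤ MulAction.stabilizer G x) :
    conjSubgroup g H = conjSubgroup l H := by
  obtain ⟨y, hyc, k, hyk⟩ := hx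
  have hfin : ∀ c : G, (Subgroup.normalizer (conjSubgroup c H : Set G)).FiniteIndex := by
    intro c
    haveI : (Subgroup.map (MulAut.conj c).toMonoidHom (Subgroup.normalizer (H : Set G))).FiniteIndex :=
      ⟨by show (conjSubgroup c (Subgroup.normalizer (H : Set G))).index ≠ 0
          rw [index_conjSubgroup]; exact hAN.index_ne_zero⟩
    exact Subgroup.finiteIndex_of_le (Subgroup.le_normalizer_map _)
  set N : Subgroup G := Subgroup.normalizer (conjSubgroup g H : Set G) ⊓ Subgroup.normalizer (conjSubgroup l H : Set G) with hN
  haveI := hfin g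
  haveI := hfin l
  haveI : N.FiniteIndex := inferInstance
  haveI : Finite (G ⧸ N) := Subgroup.finite_quotient_of_finiteIndex
  set S : G ⧸ N → Set X := fun q => (· • x) '' {b : G | (QuotientGroup.mk b : G ⧸ N) = q}
    with hS
  have horb : MulAction.orbit G x = ⋃ q, S q := by
    ext z
    simp only [MulAction.mem_orbit_iff, Set.mem_iUnion, hS, Set.mem_image, Set.mem_setOf_eq]
    constructor
    · rintro ⟨b, rfl⟩; exact ⟨QuotientGroup.mk b, b, rfl, rfl⟩
    · rintro ⟨q, b, -, rfl⟩; exact ⟨b, rfl⟩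
  have hcl : y ∈ ⋃ q, closure (S q) := by
    rw [← closure_iUnion_of_finite, ← horb]; exact hyc
  obtain ⟨q, hq⟩ := Set.mem_iUnion.mp hcl
  obtain ⟨a, rfl⟩ := QuotientGroup.mk_surjective q
  have main : ∀ c : G, conjSubgroup c H ≤ MulAction.stabilizer G x →
      N ≤ Subgroup.normalizer (conjSubgroup c H : Set G) →
      conjSubgroup (a * c) H ≤ MulAction.stabilizer G y := by
    intro c hc hNc
    set F : Set X := ⋂ s ∈ conjSubgroup (a * c) H, {z | s • z = z} with hF
    have hFclosed : IsClosed F :=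
      isClosed_biInter fun s _ => isClosed_eq (continuous_const_smul s) continuous_id
    have hsub : S (QuotientGroup.mk a) ⊆ F := by
      rintro _ ⟨b, hb, rfl⟩
      have hba : b⁻¹ * a ∈ N := QuotientGroup.eq.mp hb
      have hnorm := conjSubgroup_eq_of_mem_normalizer (hNc hba)
      have hconj : conjSubgroup (a * c) H = conjSubgroup b (conjSubgroup c H) := by
        calc conjSubgroup (a * c) H
            = conjSubgroup b (conjSubgroup (b⁻¹ * a) (conjSubgroup c H)) := by
              rw [conjSubgroup_conjSubgroup, conjSubgroup_conjSubgroup,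
                show b * (b⁻¹ * a) * c = a * c by group]
          _ = conjSubgroup b (conjSubgroup c H) := by rw [hnorm]
      rw [hF]
      refine Set.mem_iInter₂.mpr fun s hs => ?_
      rw [hconj] at hs
      obtain ⟨t, ht, rfl⟩ := hs
      have hts : t • x = x := hc ht
      show (MulAut.conj b t) • b • x = b • x
      rw [MulAut.conj_apply, smul_smul, show b * t * b⁻¹ * b = b * t by group,
        ← smul_smul, hts]
    have hyF : y ∈ F := closure_minimal hsub hFclosed hq
    intro s hs
    exact Set.mem_iInter₂.mp hyF s hs
  have h1 := main g hg inf_le_left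
  have h2 := main l hl inf_le_right
  rw [hyk] at h1 h2
  have e1 := conj_eq_conj_of_le H hAN h1
  have e2 := conj_eq_conj_of_le H hAN h2
  have e3 : conjSubgroup (a * g) H = conjSubgroup (a * l) H := e1.trans e2.symm
  have e4 := congrArg (conjSubgroup a⁻¹) e3
  rwa [conjSubgroup_conjSubgroup, conjSubgroup_conjSubgroup, inv_mul_cancel_left,
    inv_mul_cancel_left] at e4
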